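/- Let h be a positive integer, let n_1,…,n_h be positive integers, and for each i ∈ {1,…,h} and j ∈ {0,…,n_i} let val(i;j) ∈ ℝ. Let θ := max n_i and θ̄ := (θ−1)θ(θ+1)/2. Let 𝒟 := { d(j^s, j^{s+1}) : s ∈ {0,…,Σ n_i − 1}, j^s feasible for val(s), j^{s+1} ∈ Aug(j^s) }. Then |𝒟| ≤ Σ_{q=0}^{θ̄} binom(q+h, q+1) · binom(q+h−1, q) · θ^{2q+1}. -/

import Mathlib

/-- `j` is a feasible solution for `val(σ)`: `j_i ∈ {0,…,n_i}` and `∑ j_i = σ`. -/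
def IsFeasible {h : ℕ} (n : Fin h → ℕ) (σ : ℕ) (j : Fin h → ℕ) : Prop :=
  (∀ i, j i ≤ n i) ∧ (∑ i, j i) = σ

/-- `j'` is `q`-close to `j`: `∑_{i ∈ I⁻}(j_i - j'_i) = q` where `I⁻ = {i : j'_i < j_i}`. -/
def IsQClose {h : ℕ} (j j' : Fin h → ℕ) (q : ℕ) : Prop :=
  (∑ i ∈ Finset.univ.filter fun i => j' i < j i, (j i - j' i)) = q

/-- `Aug(j^s)`: feasible solutions for `val(s+1)` that are `q`-close to `j^s`
for some `q ≤ θ̄ = (θ-1)θ(θ+1)/2`. -/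
def Aug {h : ℕ} (n : Fin h → ℕ) (s : ℕ) (js : Fin h → ℕ) (j' : Fin h → ℕ) : Prop :=
  IsFeasible n (s + 1) j' ∧
    ∃ q ≤ (Finset.univ.sup n - 1) * Finset.univ.sup n * (Finset.univ.sup n + 1) / 2,
      IsQClose js j' q

/-- `d(j^s, j^{s+1}) = ∑_{i ∈ I⁺ ∪ I⁻} (val(i; j^{s+1}_i) - val(i; j^s_i))`. -/
noncomputable def dVal {h : ℕ} (val : Fin h → ℕ → ℝ) (js j' : Fin h → ℕ) : ℝ :=
  ∑ i ∈ Finset.univ.filter fun i => j' i ≠ js i, (val i (j' i) - val i (js i))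

lemma card_tuple_sum_le (h m : ℕ) :
    (Finset.Nat.antidiagonalTuple h m).card ≤ (h + m - 1).choose m := by
  have hcard : ∀ a : Fin h → ℕ, (∑ i, a i = m) →
      Multiset.card (∑ i, a i • ({i} : Multiset (Fin h))) = m := by
    intro a ha
    rw [← ha]
    change Multiset.cardHom _ = _
    rw [map_sum Multiset.cardHom]
    simp [Multiset.card_nsmul]
  have : (Finset.Nat.antidiagonalTuple h m).card
      ≤ Fintype.card (Sym (Fin h) m) := by
    rw [← Fintype.card_coe]
    refine Fintype.card_le_of_injective
      (fun x => ⟨∑ i, x.1 i • ({i} : Multiset (Fin h)),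
        hcard x.1 (Finset.Nat.mem_antidiagonalTuple.mp x.2)⟩) ?_
    rintro ⟨x, hx⟩ ⟨y, hy⟩ hxy
    have hms : (∑ i, x i • ({i} : Multiset (Fin h)))
        = ∑ i, y i • ({i} : Multiset (Fin h)) := by
      exact congrArg Sym.toMultiset hxy
    have hcount : ∀ (z : Fin h → ℕ) (j : Fin h),
        Multiset.count j (∑ i, z i • ({i} : Multiset (Fin h))) = z j := by
      intro z j
      simp [Multiset.count_sum', Multiset.count_singleton]
    ext1
    funext j
    have := congrArg (Multiset.count j) hms
    rwa [hcount, hcount] at this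
  calc _ ≤ Fintype.card (Sym (Fin h) m) := this
    _ = _ := by rw [Sym.card_sym_eq_choose, Fintype.card_fin]

/-- support of a pair of tuples -/
def dsupp {h : ℕ} (a c : Fin h → ℕ) : Finset (Fin h) :=
  Finset.univ.filter fun i => a i ≠ 0 ∨ c i ≠ 0

/-- reconstruction of the `d`-value from encoded data `(a, c, w)`. -/
noncomputable def Fdec {h : ℕ} (val : Fin h → ℕ → ℝ)
    (p : (Fin h → ℕ) × (Fin h → ℕ) × (Fin h → ℕ)) : ℝ :=
  ∑ i ∈ dsupp p.1 p.2.1,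
    (val i ((if p.2.1 i ≠ 0 then p.2.2 i + 1 else p.2.2 i) + p.1 i - p.2.1 i)
      - val i (if p.2.1 i ≠ 0 then p.2.2 i + 1 else p.2.2 i))

/-- the encoding finset for parameter `q`. -/
def Tq (h θ q : ℕ) : Finset ((Fin h → ℕ) × (Fin h → ℕ) × (Fin h → ℕ)) :=
  ((Finset.Nat.antidiagonalTuple h (q+1)) ×ˢ (Finset.Nat.antidiagonalTuple h q) ×ˢ
    Fintype.piFinset fun _ : Fin h => Finset.range θ).filter
    (fun p => ∀ i, p.1 i = 0 → p.2.1 i = 0 → p.2.2 i = 0)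

lemma card_filter_ne_le {h : ℕ} (f : Fin h → ℕ) :
    (Finset.univ.filter fun i => f i ≠ 0).card ≤ ∑ i, f i := by
  rw [Finset.card_eq_sum_ones]
  calc ∑ i ∈ Finset.univ.filter fun i => f i ≠ 0, 1
      ≤ ∑ i ∈ Finset.univ.filter fun i => f i ≠ 0, f i :=
        Finset.sum_le_sum fun i hi => Nat.one_le_iff_ne_zero.mpr (Finset.mem_filter.mp hi).2
    _ ≤ ∑ i, f i := Finset.sum_le_sum_of_subset (Finset.filter_subset _ _)

lemma card_dsupp_le {h q : ℕ} {a c : Fin h → ℕ}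
    (ha : ∑ i, a i = q + 1) (hc : ∑ i, c i = q) :
    (dsupp a c).card ≤ 2 * q + 1 := by
  have hsub : dsupp a c ⊆ (Finset.univ.filter fun i => a i ≠ 0) ∪
      (Finset.univ.filter fun i => c i ≠ 0) := by
    intro i hi
    simp only [dsupp, Finset.mem_filter, Finset.mem_union, Finset.mem_univ, true_and] at hi ⊢
    tauto
  calc (dsupp a c).card ≤ _ := Finset.card_le_card hsub
    _ ≤ (Finset.univ.filter fun i => a i ≠ 0).card
        + (Finset.univ.filter fun i => c i ≠ 0).card := Finset.card_union_le _ _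
    _ ≤ (q + 1) + q := by
        gcongr
        · exact ha ▸ card_filter_ne_le a
        · exact hc ▸ card_filter_ne_le c
    _ = 2 * q + 1 := by omega

lemma card_Tq_le {h θ : ℕ} (hθ : 0 < θ) (q : ℕ) :
    (Tq h θ q).card ≤ (q + h).choose (q + 1) * (q + h - 1).choose q * θ ^ (2 * q + 1) := by
  classical
  set V : Finset ((Fin h → ℕ) × (Fin h → ℕ) × (Fin (2 * q + 1) → ℕ)) :=
    (Finset.Nat.antidiagonalTuple h (q+1)) ×ˢ (Finset.Nat.antidiagonalTuple h q) ×ˢ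
      Fintype.piFinset fun _ : Fin (2 * q + 1) => Finset.range θ with hV
  have hmain : (Tq h θ q).card ≤ V.card := by
    refine Finset.card_le_card_of_injOn
      (fun p => (p.1, p.2.1, fun k : Fin (2 * q + 1) =>
        if hk : (k : ℕ) < (dsupp p.1 p.2.1).card then
          p.2.2 ((dsupp p.1 p.2.1).orderEmbOfFin rfl ⟨k, hk⟩) else 0)) ?_ ?_
    · intro p hp
      simp only [Finset.mem_coe, Tq, Finset.mem_filter, Finset.mem_product, Fintype.mem_piFinset,
        Finset.mem_range] at hp
      obtain ⟨⟨ha, hc, hw⟩, _⟩ := hp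
      simp only [Finset.mem_coe, hV, Finset.mem_product, Fintype.mem_piFinset, Finset.mem_range]
      refine ⟨ha, hc, fun k => ?_⟩
      split
      · exact hw _
      · exact hθ
    · intro p hp p' hp' heq
      simp only [Finset.mem_coe, Tq, Finset.mem_filter, Finset.mem_product, Fintype.mem_piFinset,
        Finset.mem_range, Finset.Nat.mem_antidiagonalTuple] at hp hp'
      obtain ⟨⟨ha, hc, hw⟩, h0⟩ := hp
      obtain ⟨⟨ha', hc', hw'⟩, h0'⟩ := hp'
      simp only [Prod.mk.injEq] at heq
      obtain ⟨e1, e2, e3⟩ := heq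
      have hsupp : dsupp p.1 p.2.1 = dsupp p'.1 p'.2.1 := by rw [e2, e1]
      have hcard : (dsupp p.1 p.2.1).card ≤ 2 * q + 1 := card_dsupp_le ha hc
      have e4 : p.2.2 = p'.2.2 := by
        funext i
        by_cases hi : i ∈ dsupp p.1 p.2.1
        · have hrange : i ∈ Set.range ((dsupp p.1 p.2.1).orderEmbOfFin rfl) := by
            rw [Finset.range_orderEmbOfFin]
            exact_mod_cast hi
          obtain ⟨k, hk⟩ := hrange
          have hk2 : (k : ℕ) < 2 * q + 1 := lt_of_lt_of_le k.2 hcard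
          have := congrFun e3 ⟨k, hk2⟩
          simp only at this
          rw [dif_pos (by exact k.2 : ((⟨(k : ℕ), hk2⟩ : Fin (2*q+1)) : ℕ) < _)] at this
          rw [← hsupp] at this
          rw [dif_pos (by exact k.2 : ((⟨(k : ℕ), hk2⟩ : Fin (2*q+1)) : ℕ) < _)] at this
          have hkk : (⟨((⟨(k : ℕ), hk2⟩ : Fin (2*q+1)) : ℕ), by exact k.2⟩ :
              Fin (dsupp p.1 p.2.1).card) = k := by ext; rfl
          rw [hkk] at this
          rw [hk] at this
          exact this
        · simp only [dsupp, Finset.mem_filter, Finset.mem_univ, true_and, not_or,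
            not_not] at hi
          rw [h0 i hi.1 hi.2, h0' i (e1 ▸ hi.1) (e2 ▸ hi.2)]
      exact Prod.ext e1 (Prod.ext e2 e4)
  refine hmain.trans ?_
  rw [hV, Finset.card_product, Finset.card_product, Fintype.card_piFinset]
  simp only [Finset.card_range, Finset.prod_const, Finset.card_univ, Fintype.card_fin]
  rw [← mul_assoc]
  gcongr
  · calc _ ≤ (h + (q+1) - 1).choose (q+1) := card_tuple_sum_le h (q+1)
      _ = _ := by congr 1; omega
  · calc _ ≤ (h + q - 1).choose q := card_tuple_sum_le h q
      _ = _ := by congr 1; omega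

theorem stmt11 {h : ℕ} (hh : 0 < h) (n : Fin h → ℕ) (hn : ∀ i, 0 < n i)
    (val : Fin h → ℕ → ℝ) :
    letI θ : ℕ := Finset.univ.sup n
    letI 𝒟 : Set ℝ := {t : ℝ | ∃ s : ℕ, s < ∑ i, n i ∧
      ∃ js : Fin h → ℕ, IsFeasible n s js ∧
        ∃ j' : Fin h → ℕ, Aug n s js j' ∧ t = dVal val js j'}
    𝒟.Finite ∧
      𝒟.ncard ≤ ∑ q ∈ Finset.range ((θ - 1) * θ * (θ + 1) / 2 + 1),
        Nat.choose (q + h) (q + 1) * Nat.choose (q + h - 1) q * θ ^ (2 * q + 1) := by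
  classical
  set θ : ℕ := Finset.univ.sup n with hθdef
  set 𝒟 : Set ℝ := {t : ℝ | ∃ s : ℕ, s < ∑ i, n i ∧
      ∃ js : Fin h → ℕ, IsFeasible n s js ∧
        ∃ j' : Fin h → ℕ, Aug n s js j' ∧ t = dVal val js j'} with hD
  have hθ : 0 < θ := lt_of_lt_of_le (hn ⟨0, hh⟩) (Finset.le_sup (Finset.mem_univ _))
  set θb : ℕ := (θ - 1) * θ * (θ + 1) / 2 with hθb
  set T : Finset ((Fin h → ℕ) × (Fin h → ℕ) × (Fin h → ℕ)) :=
    (Finset.range (θb + 1)).biUnion (fun q => Tq h θ q) with hT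
  have hcover : 𝒟 ⊆ Fdec val '' ↑T := by
    rintro t ⟨s, hs, js, ⟨hjle, hjsum⟩, j', ⟨⟨hj'le, hj'sum⟩, q, hqle, hqclose⟩, rfl⟩
    set a : Fin h → ℕ := fun i => j' i - js i with haa
    set c : Fin h → ℕ := fun i => js i - j' i with hcc
    set w : Fin h → ℕ := fun i =>
      if j' i = js i then 0 else if js i < j' i then js i else js i - 1 with hww
    have hq2 : (∑ i ∈ Finset.univ.filter fun i => j' i < js i, (js i - j' i)) = q := hqclose
    have hsc : ∑ i, c i = q := by
      rw [← hq2]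
      show ∑ i, (js i - j' i) = _
      exact (Finset.sum_filter_of_ne fun i _ hne => by omega).symm
    have hsa : ∑ i, a i = q + 1 := by
      have key : ∑ i, (a i + js i) = ∑ i, (c i + j' i) := by
        refine Finset.sum_congr rfl fun i _ => ?_
        simp only [haa, hcc]
        omega
      rw [Finset.sum_add_distrib, Finset.sum_add_distrib, hjsum, hj'sum, hsc] at key
      omega
    have hmemT : (a, c, w) ∈ T := by
      rw [hT]
      rw [← hθdef] at hqle
      refine Finset.mem_biUnion.mpr ⟨q, Finset.mem_range.mpr (Nat.lt_succ_of_le hqle), ?_⟩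
      simp only [Tq, Finset.mem_filter, Finset.mem_product, Fintype.mem_piFinset,
        Finset.mem_range, Finset.Nat.mem_antidiagonalTuple]
      refine ⟨⟨hsa, hsc, fun i => ?_⟩, fun i hai hci => ?_⟩
      · have hle : js i ≤ n i := hjle i
        have hle' : j' i ≤ n i := hj'le i
        have hnθ : n i ≤ θ := Finset.le_sup (Finset.mem_univ _)
        simp only [hww]
        split_ifs <;> omega
      · simp only [haa, hcc] at hai hci
        simp only [hww]
        rw [if_pos (by omega)]
    refine ⟨(a, c, w), hmemT, ?_⟩
    unfold Fdec dVal dsupp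
    have hfil : (Finset.univ.filter fun i => a i ≠ 0 ∨ c i ≠ 0)
        = Finset.univ.filter fun i => j' i ≠ js i := by
      refine Finset.filter_congr fun i _ => ?_
      simp only [haa, hcc]
      omega
    simp only [hfil]
    refine (Finset.sum_congr rfl fun i hi => ?_).symm
    have hne : j' i ≠ js i := by
      have := Finset.mem_filter.mp hi
      exact this.2
    have e1 : (if c i ≠ 0 then w i + 1 else w i) = js i := by
      simp only [haa, hcc, hww]
      split_ifs <;> omega
    have e2 : (if c i ≠ 0 then w i + 1 else w i) + a i - c i = j' i := by
      simp only [haa, hcc, hww]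
      split_ifs <;> omega
    rw [e2, e1]
  have hfinim : (Fdec val '' ↑T).Finite := T.finite_toSet.image _
  refine ⟨hfinim.subset hcover, ?_⟩
  calc 𝒟.ncard ≤ (Fdec val '' ↑T).ncard := Set.ncard_le_ncard hcover hfinim
    _ ≤ (T : Set ((Fin h → ℕ) × (Fin h → ℕ) × (Fin h → ℕ))).ncard :=
        Set.ncard_image_le T.finite_toSet
    _ = T.card := Set.ncard_coe_finset T
    _ ≤ ∑ q ∈ Finset.range (θb + 1), (Tq h θ q).card := Finset.card_biUnion_le
    _ ≤ _ := Finset.sum_le_sum fun q _ => card_Tq_le hθ q
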